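/- Let s = c₁^{x₁}···cₙ^{xₙ} be a string with cᵢ ≠ c_{i+1} and xᵢ ≥ 1, and let c be a character with c ≠ cₙ. Then there exists a unique y with 0 ≤ y ≤ |s| such that s·c^x is a P-position of StrNim if and only if x = y. -/

import Mathlib

/-- A move in StrNim: remove a nonempty contiguous block of a single repeated character. -/
def StrMove {α : Type*} (s t : List α) : Prop :=
  ∃ (x : List α) (c : α) (k : ℕ) (y : List α),
    1 ≤ k ∧ s = x ++ List.replicate k c ++ y ∧ t = x ++ y

/-- N-positions of StrNim: there is a move to a position all of whose successors are N-positions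
(i.e. a move to a P-position). -/
inductive NPos {α : Type*} : List α → Prop where
  | intro {s t : List α} (h : StrMove s t) (ht : ∀ u, StrMove t u → NPos u) : NPos s

/-- P-positions of StrNim: every successor is an N-position. -/
def PPos {α : Type*} (s : List α) : Prop := ∀ t, StrMove s t → NPos t

lemma strmove_length {α : Type*} {s t : List α} (h : StrMove s t) : t.length < s.length := by
  obtain ⟨x, c, k, y, hk, rfl, rfl⟩ := h
  simp only [List.length_append, List.length_replicate]
  omega

lemma pos_cases {α : Type*} (s : List α) : PPos s ∨ NPos s := by
  classical
  by_cases h : PPos s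
  · exact Or.inl h
  · right
    unfold PPos at h
    push_neg at h
    obtain ⟨t, hmv, hnt⟩ := h
    have hlt := strmove_length hmv
    rcases pos_cases t with hp | hnp
    · exact NPos.intro hmv hp
    · exact absurd hnp hnt
termination_by s.length

lemma not_both {α : Type*} (s : List α) : ¬ (PPos s ∧ NPos s) := by
  rintro ⟨hp, hnp⟩
  cases hnp with
  | intro hmv ht =>
    rename_i t
    have hlt := strmove_length hmv
    exact not_both t ⟨ht, hp t hmv⟩
termination_by s.length

lemma strmove_drop {α : Type*} (s : List α) (c : α) {a b : ℕ} (h : b < a) :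
    StrMove (s ++ List.replicate a c) (s ++ List.replicate b c) := by
  refine ⟨s ++ List.replicate b c, c, a - b, [], by omega, ?_, by simp⟩
  rw [List.append_nil, List.append_assoc, ← List.replicate_add]
  congr 2
  omega

lemma ppos_rep_unique {α : Type*} (s : List α) (c : α) {a b : ℕ}
    (ha : PPos (s ++ List.replicate a c)) (hb : PPos (s ++ List.replicate b c)) : a = b := by
  rcases lt_trichotomy a b with h | h | h
  · exact absurd ⟨hb, NPos.intro (strmove_drop s c h) ha⟩ (not_both _)
  · exact h
  · exact absurd ⟨ha, NPos.intro (strmove_drop s c h) hb⟩ (not_both _)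

/-- Trailing-run decomposition. -/
lemma decomp {α : Type*} (s : List α) (c : α) :
    ∃ (u : List α) (r : ℕ), s = u ++ List.replicate r c ∧
      (∀ a, u.getLast? = some a → a ≠ c) := by
  classical
  induction s using List.reverseRecOn with
  | nil => exact ⟨[], 0, by simp, by simp⟩
  | append_singleton l a ih =>
    by_cases hac : a = c
    · obtain ⟨u, r, hdec, hlastu⟩ := ih
      refine ⟨u, r + 1, ?_, hlastu⟩
      rw [hdec, hac, List.append_assoc, List.replicate_succ']
    · refine ⟨l ++ [a], 0, by simp, ?_⟩
      intro b hb
      rw [List.getLast?_concat] at hb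
      cases hb
      exact hac

/-- Classification of the moves of `s ++ c^n` when `s` does not end in `c`. -/
lemma move_classify {α : Type*} {s : List α} {c : α} {n : ℕ}
    (hc : ∀ a, s.getLast? = some a → a ≠ c) {t : List α}
    (h : StrMove (s ++ List.replicate n c) t) :
    (∃ s', StrMove s s' ∧ t = s' ++ List.replicate n c) ∨
    (∃ m, m < n ∧ t = s ++ List.replicate m c) := by
  obtain ⟨x, d, k, y, hk, heq, rfl⟩ := h
  have hlen : s.length + n = x.length + k + y.length := by
    have := congrArg List.length heq
    simp only [List.length_append, List.length_replicate] at this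
    omega
  rcases le_or_gt (x.length + k) s.length with hle | hgt
  · -- the removed block lies inside `s`
    left
    have h1 : x ++ List.replicate k d = s.take (x.length + k) := by
      have h1' := congrArg (List.take (x.length + k)) heq
      rw [List.take_append_of_le_length hle, List.take_left' (by simp)] at h1'
      exact h1'.symm
    have h2 : y = s.drop (x.length + k) ++ List.replicate n c := by
      have h2' := congrArg (List.drop (x.length + k)) heq
      rw [List.drop_append_of_le_length hle, List.drop_left' (by simp)] at h2'
      exact h2'.symm
    refine ⟨x ++ s.drop (x.length + k), ⟨x, d, k, s.drop (x.length + k), hk, ?_, rfl⟩, ?_⟩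
    · rw [h1]
      exact (List.take_append_drop _ s).symm
    · rw [h2, List.append_assoc]
  · rcases le_or_gt s.length x.length with hxL | hxL
    · -- the removed block lies inside the replicate part
      right
      have hx : s ++ List.replicate (x.length - s.length) c = x := by
        have h3 := congrArg (List.take x.length) heq
        rw [List.take_append, List.take_of_length_le hxL,
          List.take_replicate, List.append_assoc, List.take_left' rfl] at h3
        rw [min_eq_left (by omega)] at h3
        exact h3
      have hy : y = List.replicate (s.length + n - x.length - k) c := by
        have h4 := congrArg (List.drop (x.length + k)) heq
        rw [List.drop_append, List.drop_replicate,
          List.drop_eq_nil_of_le (by omega), List.nil_append, List.drop_left' (by simp)] at h4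
        rw [← h4]
        congr 1
        omega
      refine ⟨n - k, by omega, ?_⟩
      rw [← hx, hy, List.append_assoc, ← List.replicate_add]
      congr 2
      omega
    · -- the removed block crosses the boundary: impossible
      exfalso
      have e1 : (s ++ List.replicate n c)[s.length - 1]? = s.getLast? := by
        rw [List.getElem?_append_left (by omega), List.getLast?_eq_getElem?]
      have e2 : (x ++ List.replicate k d ++ y)[s.length - 1]? = some d := by
        rw [List.append_assoc, List.getElem?_append_right (by omega),
          List.getElem?_append_left (by simp; omega),
          List.getElem?_replicate_of_lt (by omega)]
      have e3 : (s ++ List.replicate n c)[s.length]? = some c := by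
        rw [List.getElem?_append_right (le_refl _), Nat.sub_self,
          List.getElem?_replicate_of_lt (by omega)]
      have e4 : (x ++ List.replicate k d ++ y)[s.length]? = some d := by
        rw [List.append_assoc, List.getElem?_append_right (by omega),
          List.getElem?_append_left (by simp; omega),
          List.getElem?_replicate_of_lt (by omega)]
      have hd1 : s.getLast? = some d := by rw [← e1, heq, e2]
      have hd2 : c = d := by
        have := e3.symm.trans (by rw [heq, e4])
        exact Option.some_injective _ this
      exact hc d hd1 hd2.symm

lemma exists_ppos {α : Type*} (c : α) (s : List α)
    (hc : ∀ a, s.getLast? = some a → a ≠ c) :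
    ∃ y, y ≤ s.length ∧ PPos (s ++ List.replicate y c) := by
  classical
  by_cases hex : ∃ x, x < s.length ∧ PPos (s ++ List.replicate x c)
  · obtain ⟨x, hx, hp⟩ := hex
    exact ⟨x, le_of_lt hx, hp⟩
  · push_neg at hex
    refine ⟨s.length, le_refl _, ?_⟩
    intro t ht
    rcases move_classify hc ht with ⟨s', hmv, rfl⟩ | ⟨m, hm, rfl⟩
    · rcases pos_cases (s' ++ List.replicate s.length c) with hp | hnp
      · exfalso
        obtain ⟨u, r, rfl, hu⟩ := decomp s' c
        rw [List.append_assoc, ← List.replicate_add] at hp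
        have hlen : u.length + r < s.length := by simpa using strmove_length hmv
        obtain ⟨y, hy, hyp⟩ := exists_ppos c u hu
        have hequ := ppos_rep_unique u c hp hyp
        omega
      · exact hnp
    · rcases pos_cases (s ++ List.replicate m c) with hp | hnp
      · exact absurd hp (hex m hm)
      · exact hnp
termination_by s.length
decreasing_by omega

lemma flatten_getLast {α : Type*} (runs : List (α × ℕ)) (hpos : ∀ p ∈ runs, 1 ≤ p.2) (a : α)
    (h : ((runs.map (fun p => List.replicate p.2 p.1)).flatten).getLast? = some a) :
    ∃ p, runs.getLast? = some p ∧ p.1 = a := by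
  induction runs using List.reverseRecOn with
  | nil => simp at h
  | append_singleton l p _ =>
    have hp : 1 ≤ p.2 := hpos p (by simp)
    have hrep : (List.replicate p.2 p.1).getLast? = some p.1 := by
      obtain ⟨k, hk⟩ : ∃ k, p.2 = k + 1 := ⟨p.2 - 1, by omega⟩
      rw [hk, List.replicate_succ', List.getLast?_concat]
    rw [List.map_append, List.flatten_append] at h
    simp only [List.map_cons, List.map_nil, List.flatten_cons, List.flatten_nil,
      List.append_nil] at h
    rw [List.getLast?_append_of_ne_nil, hrep] at h
    · cases h
      exact ⟨p, List.getLast?_concat, rfl⟩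
    · intro hnil
      rw [hnil] at hrep
      simp at hrep

/-- Let `s = c₁^{x₁} ⋯ cₙ^{xₙ}` with `cᵢ ≠ c_{i+1}` and `xᵢ ≥ 1`, and let `c ≠ cₙ`.
There is a unique `y` with `0 ≤ y ≤ |s|` such that `s · c^x` is a P-position iff `x = y`. -/
theorem stmt_2 {α : Type*} (runs : List (α × ℕ)) (c : α)
    (hpos : ∀ p ∈ runs, 1 ≤ p.2)
    (hadj : runs.Chain' (fun p q => p.1 ≠ q.1))
    (hlast : ∀ p, runs.getLast? = some p → p.1 ≠ c)
    (s : List α) (hs : s = (runs.map (fun p => List.replicate p.2 p.1)).flatten) :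
    ∃! y : ℕ, y ≤ s.length ∧ ∀ x : ℕ, (PPos (s ++ List.replicate x c) ↔ x = y) := by
  have hc : ∀ a, s.getLast? = some a → a ≠ c := by
    intro a ha
    rw [hs] at ha
    obtain ⟨p, hp, rfl⟩ := flatten_getLast runs hpos a ha
    exact hlast p hp
  obtain ⟨y, hy, hp⟩ := exists_ppos c s hc
  refine ⟨y, ⟨hy, fun x => ⟨fun hx => ppos_rep_unique s c hx hp, fun h => h ▸ hp⟩⟩, ?_⟩
  rintro y' ⟨hy', hiff⟩
  exact ((hiff y).mp hp).symm
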